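/- Let H₁, H₂ be groups and K a common subgroup included via j₁ : K → H₁ and j₂ : K → H₂, and let G₁ ≥ H₁, G₂ ≥ H₂ with a common subgroup A ≥ K compatible with the inclusions (i.e., i₁|_K = j₁ composed with H₁ ↪ G₁, similarly for i₂, and H₁ ∩ i₁(A) = j₁(K), H₂ ∩ i₂(A) = j₂(K) inside G₁, G₂ respectively). Then the natural homomorphism H₁ *_K H₂ → G₁ *_A G₂ is injective. -/

import Mathlib

open Monoid

/-- Let `G₁ *_A G₂` be an amalgamated free product along injections `φ i : A → G i`
(`i : Bool`), let `H i ≤ G i` be subgroups and `K ≤ A` a subgroup with `φ i (K) ≤ H i`,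
such that `H i ∩ φ i (A) = φ i (K)` for each `i`.  Then the natural homomorphism
`H₁ *_K H₂ → G₁ *_A G₂` is injective. -/
theorem subamalgam_embeds {A : Type*} [Group A] (G : Bool → Type*)
    [∀ i, Group (G i)] (φ : ∀ i, A →* G i) (hinj : ∀ i, Function.Injective (φ i))
    (H : ∀ i, Subgroup (G i)) (K : Subgroup A)
    (hHK : ∀ i, ∀ k ∈ K, φ i k ∈ H i)
    (hinter : ∀ i, H i ⊓ (φ i).range = K.map (φ i)) :
    Function.Injective
      (PushoutI.lift
        (φ := fun i => MonoidHom.codRestrict ((φ i).comp K.subtype) (H i)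
          (fun k => hHK i k.1 k.2))
        (fun i => (PushoutI.of (φ := φ) i).comp (H i).subtype)
        ((PushoutI.base φ).comp K.subtype)
        (by
          intro i
          ext k
          exact DFunLike.congr_fun (PushoutI.of_comp_eq_base (φ := φ) i) k.1)) := by
  classical
  set ψ : ∀ i, ↥K →* ↥(H i) := fun i => MonoidHom.codRestrict ((φ i).comp K.subtype) (H i)
    (fun k => hHK i k.1 k.2) with hψ
  set f := PushoutI.lift (φ := ψ)
    (fun i => (PushoutI.of (φ := φ) i).comp (H i).subtype)
    ((PushoutI.base φ).comp K.subtype)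
    (by
      intro i
      ext k
      exact DFunLike.congr_fun (PushoutI.of_comp_eq_base (φ := φ) i) k.1) with hf
  have hψinj : ∀ i, Function.Injective (ψ i) := by
    intro i x y h
    apply Subtype.ext
    apply hinj i
    exact congrArg Subtype.val h
  letI := fun i => Classical.decEq (G i)
  rcases Monoid.PushoutI.NormalWord.transversal_nonempty ψ hψinj with ⟨d⟩
  rw [injective_iff_map_eq_one]
  intro x hx
  -- normal form of `x`
  set w : PushoutI.NormalWord d := PushoutI.NormalWord.equiv x with hw
  have hxw : x = w.prod := (PushoutI.NormalWord.equiv.left_inv x).symm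
  -- the mapped word in `G`
  have hchain : (w.toList.map (fun l => (⟨l.1, (l.2 : G l.1)⟩ : Σ i, G i))).IsChain
      fun l l' => l.1 ≠ l'.1 := by
    refine List.isChain_map_of_isChain _ ?_ w.toWord.chain_ne
    intro a b hab
    exact hab
  set w' : CoprodI.Word G :=
    { toList := w.toList.map (fun l => ⟨l.1, (l.2 : G l.1)⟩)
      ne_one := by
        rintro l hl
        rcases List.mem_map.1 hl with ⟨a, ha, rfl⟩
        have h1 := w.toWord.ne_one a ha
        exact fun hc => h1 (OneMemClass.coe_eq_one.1 hc)
      chain_ne := hchain } with hw'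
  -- the mapped word is reduced
  have hred : PushoutI.Reduced φ w' := by
    rintro ⟨i, g⟩ hg hgr
    rcases List.mem_map.1 hg with ⟨⟨j, h⟩, hjh, heq⟩
    rw [Sigma.mk.inj_iff] at heq
    obtain ⟨rfl, hgh⟩ := heq
    have hgh' : (h : G j) = g := eq_of_heq hgh
    subst hgh'
    -- `h` is in the image of `K`
    have hmem : (h : G j) ∈ K.map (φ j) := by
      rw [← hinter j]
      exact ⟨h.2, hgr⟩
    rcases hmem with ⟨k, hk, hkh⟩
    have hrange : h ∈ (ψ j).range := ⟨⟨k, hk⟩, Subtype.ext hkh⟩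
    -- but `h` is a letter of a normal word, so not in the range
    have hset : (h : ↥(H j)) ∈ d.set j := w.normalized j h hjh
    have h1 : h = 1 := by
      have e1 : (((d.compl j).equiv h).2 : ↥(H j)) = h :=
        (Subgroup.IsComplement.equiv_snd_eq_self_iff_mem _ (Subgroup.one_mem _)).2 hset
      have e2 : (((d.compl j).equiv h).2 : ↥(H j)) = 1 :=
        (Subgroup.IsComplement.coe_equiv_snd_eq_one_iff_mem _ (d.one_mem j)).2 hrange
      rw [e1] at e2
      exact e2
    exact w.toWord.ne_one _ hjh h1
  -- compute `f x`
  have key : ∀ (l : List (Σ i, ↥(H i))),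
      f (PushoutI.ofCoprodI (l.map fun a => CoprodI.of a.2).prod) =
        PushoutI.ofCoprodI
          (((l.map (fun a => (⟨a.1, (a.2 : G a.1)⟩ : Σ i, G i))).map
            fun a => CoprodI.of a.2).prod) := by
    intro l
    induction l with
    | nil => simp
    | cons a l ih =>
      simp only [List.map_cons, List.prod_cons, map_mul, ih, PushoutI.ofCoprodI_of]
      congr 1
  have hfprod : f (PushoutI.ofCoprodI w.toWord.prod) = PushoutI.ofCoprodI w'.prod :=
    key w.toList
  have hfx : f x = PushoutI.base φ (w.head : A) * PushoutI.ofCoprodI w'.prod := by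
    rw [hxw, PushoutI.NormalWord.prod, map_mul, hfprod, hf, PushoutI.lift_base]
    rfl
  rw [hfx] at hx
  have hbase : PushoutI.ofCoprodI w'.prod ∈ (PushoutI.base φ).range := by
    refine ⟨(w.head : A)⁻¹, ?_⟩
    rw [map_inv]
    exact inv_eq_of_mul_eq_one_right hx
  have hempty : w' = CoprodI.Word.empty := hred.eq_empty_of_mem_range hinj hbase
  have hnil : w.toList = [] :=
    List.map_eq_nil_iff.1 (congrArg CoprodI.Word.toList hempty)
  -- so `x = base ψ w.head`, and `w.head = 1`
  have hxbase : x = PushoutI.base ψ w.head := by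
    rw [hxw, PushoutI.NormalWord.prod]
    have h1 : w.toWord.prod = 1 := by
      rw [CoprodI.Word.prod, hnil]
      simp
    rw [h1, map_one, mul_one]
  have hprod1 : PushoutI.ofCoprodI (φ := φ) w'.prod = 1 := by
    rw [hempty]
    simp
  rw [hprod1, mul_one] at hx
  have hhead : w.head = 1 := by
    apply Subtype.ext
    apply PushoutI.base_injective hinj
    simpa using hx
  rw [hxbase, hhead, map_one]
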